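/- Let q ≥ 2 and suppose (i,j,k) ∈ ℤ³ satisfies: −r ≤ i ≤ −(q³−q+1), −s ≤ i + (q²+q)k < −s + (q²+q), and −t ≤ qi + (q²+q)j + (q+1)k < −t + (q²+q), where 0 ≤ s,t < q+1 and r ≥ q³−q. Then −q²i − (q³−q)j − (q³+q²−q−1)k > (q²+q)(k − q + 1) − (q³+q²), and moreover k ≥ q−1, hence −q²i − (q³−q)j − (q³+q²−q−1)k > −(q³+q²). -/
import Mathlib


/-- The key estimate: if −r ≤ i ≤ −(q³−q+1) with the second and third defining
    inequalities of Ω_{r,s,t,u} (0 ≤ s,t < q+1, r ≥ q³−q), then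
    −q²i − (q³−q)j − (q³+q²−q−1)k > (q²+q)(k−q+1) − (q³+q²), k ≥ q−1, and hence
    −q²i − (q³−q)j − (q³+q²−q−1)k > −(q³+q²). -/
theorem stmt_14 (q r s t i j k : ℤ) (hq : 2 ≤ q)
    (hs0 : 0 ≤ s) (hs1 : s < q + 1) (ht0 : 0 ≤ t) (ht1 : t < q + 1)
    (hr : q ^ 3 - q ≤ r)
    (h1 : -r ≤ i) (h2 : i ≤ -(q ^ 3 - q + 1))
    (h3 : -s ≤ i + (q ^ 2 + q) * k)
    (h4 : i + (q ^ 2 + q) * k < -s + (q ^ 2 + q))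
    (h5 : -t ≤ q * i + (q ^ 2 + q) * j + (q + 1) * k)
    (h6 : q * i + (q ^ 2 + q) * j + (q + 1) * k < -t + (q ^ 2 + q)) :
    (q ^ 2 + q) * (k - q + 1) - (q ^ 3 + q ^ 2)
        < -q ^ 2 * i - (q ^ 3 - q) * j - (q ^ 3 + q ^ 2 - q - 1) * k ∧
    q - 1 ≤ k ∧
    -(q ^ 3 + q ^ 2)
        < -q ^ 2 * i - (q ^ 3 - q) * j - (q ^ 3 + q ^ 2 - q - 1) * k := by
  have hq0 : (0:ℤ) < q := by linarith
  have hq1 : (0:ℤ) ≤ q - 1 := by linarith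
  have hkey : (q ^ 2 + q) * (k - q + 1) - (q ^ 3 + q ^ 2)
      < -q ^ 2 * i - (q ^ 3 - q) * j - (q ^ 3 + q ^ 2 - q - 1) * k := by
    nlinarith [mul_nonneg hq0.le hs0, mul_nonneg hq1 ht0,
      mul_lt_mul_of_pos_left h4 hq0, mul_le_mul_of_nonneg_left h6.le hq1]
  have hk : q - 1 ≤ k := by
    nlinarith [sq_nonneg q, sq_nonneg (k - q + 1), mul_pos hq0 hq0]
  exact ⟨hkey, hk, by nlinarith [mul_nonneg (by positivity : (0:ℤ) ≤ q ^ 2 + q) (by linarith : (0:ℤ) ≤ k - q + 1)]⟩
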